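/- arXiv:1712.08479 — 4 statements merged into one kernel-verified Lean document; each statement's English description precedes it below -/
import Mathlib

section
/- Consider a 3-cell TPFA system with cells 1, 2 connected to an intersection cell 0 with transmissibilities t₁, t₂ > 0 and no direct connection between 1 and 2: A = [[t₁+t₂, -t₁, -t₂],[-t₁, t₁+d₁, 0],[-t₂, 0, t₂+d₂]] with d₁, d₂ ≥ 0, eliminating the intersection unknown (index 0) via the Schur complement yields a direct transmissibility between cells 1 and 2 equal to t₁t₂/(t₁+t₂), i.e., the Star-Delta value. -/
open Matrix

/-- Eliminating the intersection cell (index 0) of the 3-cell TPFA system via the Schur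
complement yields a direct transmissibility `t₁t₂/(t₁+t₂)` between cells 1 and 2, i.e. the
Star-Delta value (the reduced off-diagonal entry is `-(t₁t₂/(t₁+t₂))`). -/
theorem schur_three_cell_star_delta (t₁ t₂ d₁ d₂ : ℝ)
    (h₁ : 0 < t₁) (h₂ : 0 < t₂) (hd₁ : 0 ≤ d₁) (hd₂ : 0 ≤ d₂) :
    ((!![t₁ + d₁, 0; 0, t₂ + d₂] : Matrix (Fin 2) (Fin 2) ℝ)
        - !![-t₁; -t₂] * (!![t₁ + t₂] : Matrix (Fin 1) (Fin 1) ℝ)⁻¹ * !![-t₁, -t₂]) 0 1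
      = -(t₁ * t₂ / (t₁ + t₂)) := by
  have h : (!![t₁ + t₂] : Matrix (Fin 1) (Fin 1) ℝ)⁻¹ = !![(t₁+t₂)⁻¹] := by
    rw [Matrix.inv_def]
    simp [Matrix.adjugate_fin_one, Matrix.det_fin_one]
    rw [Matrix.smul_eq_mul_diagonal]
    ext i j; fin_cases i; fin_cases j; simp [Matrix.mul_apply]
  rw [h]
  simp [Matrix.mul_apply, Fin.sum_univ_succ, div_eq_mul_inv]
  ring
end

section
/- In the star configuration with an additional intersection conductance: if the central cell also has a leakage/normal resistance so that its connection to outer cell i has transmissibility tᵢ = αᵢβ/(αᵢ+β) for an intersection half-transmissibility β > 0, then as β → ∞ the Schur-complement-derived direct transmissibility between cells i and j converges to the Star-Delta value αᵢαⱼ/Σₖ αₖ. -/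
open Filter

lemma aux_tendsto (a : ℝ) (ha : 0 < a) :
    Tendsto (fun β : ℝ => a * β / (a + β)) atTop (nhds a) := by
  have h2 : Tendsto (fun β : ℝ => a / β + 1) atTop (nhds 1) := by
    have := (tendsto_const_nhds (x := a)).div_atTop tendsto_id
    simpa using this.add tendsto_const_nhds
  have h1 : Tendsto (fun β : ℝ => a / (a / β + 1)) atTop (nhds a) := by
    have := (tendsto_const_nhds (x := a)).div h2 one_ne_zero
    simpa [Pi.div_def] using this
  refine h1.congr' ?_
  filter_upwards [eventually_gt_atTop 0] with β hβ
  have hβ0 : β ≠ 0 := ne_of_gt hβ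
  have hab : a + β ≠ 0 := by positivity
  field_simp

/-- With connection transmissibilities `tₖ(β) = αₖβ/(αₖ+β)`, the Schur-complement direct
transmissibility `tᵢtⱼ/(Σₖ tₖ)` converges to the Star-Delta value `αᵢαⱼ/(Σₖ αₖ)` as the
intersection half-transmissibility `β → ∞`. -/
theorem schur_tendsto_star_delta {n : ℕ} (α : Fin n → ℝ) (hα : ∀ k, 0 < α k)
    (i j : Fin n) (hij : i ≠ j) :
    Tendsto (fun β : ℝ =>
        (α i * β / (α i + β)) * (α j * β / (α j + β))
          / ∑ k, α k * β / (α k + β))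
      atTop (nhds (α i * α j / ∑ k, α k)) := by
  have hsum : Tendsto (fun β : ℝ => ∑ k, α k * β / (α k + β)) atTop (nhds (∑ k, α k)) :=
    tendsto_finset_sum _ fun k _ => aux_tendsto (α k) (hα k)
  have hpos : (0 : ℝ) < ∑ k, α k :=
    Finset.sum_pos (fun k _ => hα k) ⟨i, Finset.mem_univ i⟩
  exact ((aux_tendsto (α i) (hα i)).mul (aux_tendsto (α j) (hα j))).div hsum (ne_of_gt hpos)
end

section
/- The implicit-Euler upwind finite-volume update for pure advection with no sources is a bounded scheme: if the fluxes are divergence-free on each cell (Σⱼ A_{ij} u_{ij} = 0) and boundary inflow concentrations lie in [0,1], then the new concentrations Tⁿ lie in [0,1] whenever Tⁿ⁻¹ does, for any time step Δt > 0. -/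
/-- Maximum principle for the implicit-Euler upwind finite-volume scheme: with `M` having
nonpositive off-diagonal entries and nonnegative row sums (divergence-free fluxes, the row
sum being the boundary inflow coefficient) and boundary inflow concentrations in `[0,1]`,
the new concentrations lie in `[0,1]` whenever the old ones do, for any `Δt > 0`. -/
theorem implicit_upwind_maximum_principle {n : ℕ} (Δt : ℝ) (hΔt : 0 < Δt)
    (M : Matrix (Fin n) (Fin n) ℝ)
    (hoff : ∀ i j, i ≠ j → M i j ≤ 0)
    (hrow : ∀ i, 0 ≤ ∑ j, M i j)
    (Tin Told Tn : Fin n → ℝ)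
    (hTin : ∀ i, Tin i ∈ Set.Icc (0 : ℝ) 1)
    (hTold : ∀ i, Told i ∈ Set.Icc (0 : ℝ) 1)
    (hscheme : ∀ i, Tn i + Δt * ∑ j, M i j * Tn j
      = Told i + Δt * (∑ j, M i j) * Tin i) :
    ∀ i, Tn i ∈ Set.Icc (0 : ℝ) 1 := by
  intro i
  have hne : (Finset.univ : Finset (Fin n)).Nonempty := ⟨i, Finset.mem_univ i⟩
  obtain ⟨i0, -, hmax⟩ := Finset.exists_max_image Finset.univ Tn hne
  obtain ⟨i1, -, hmin⟩ := Finset.exists_min_image Finset.univ Tn hne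
  constructor
  · -- lower bound via the minimizer i1
    have hS0 : 0 ≤ ∑ j, M i1 j := hrow i1
    have h1 : ∑ j, M i1 j * Tn j ≤ ∑ j, M i1 j * Tn i1 := by
      apply Finset.sum_le_sum
      intro j _
      rcases eq_or_ne i1 j with rfl | hj
      · exact le_refl _
      · exact mul_le_mul_of_nonpos_left (hmin j (Finset.mem_univ j)) (hoff i1 j hj)
    have hsum : ∑ j, M i1 j * Tn i1 = (∑ j, M i1 j) * Tn i1 := by
      rw [Finset.sum_mul]
    have hsch := hscheme i1
    have hrhs : 0 ≤ Told i1 + Δt * (∑ j, M i1 j) * Tin i1 := by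
      have := (hTold i1).1
      have := (hTin i1).1
      have : 0 ≤ Δt * (∑ j, M i1 j) * Tin i1 :=
        mul_nonneg (mul_nonneg hΔt.le hS0) (hTin i1).1
      linarith [(hTold i1).1]
    have hkey : 0 ≤ (1 + Δt * (∑ j, M i1 j)) * Tn i1 := by
      have h2 : Told i1 + Δt * (∑ j, M i1 j) * Tin i1
          ≤ Tn i1 + Δt * ((∑ j, M i1 j) * Tn i1) := by
        rw [← hsch, ← hsum]
        nlinarith [h1]
      nlinarith [hrhs, h2]
    have hpos : 0 < 1 + Δt * (∑ j, M i1 j) := by nlinarith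
    have : 0 ≤ Tn i1 := nonneg_of_mul_nonneg_right (by linarith [hkey]) hpos
    exact le_trans this (hmin i (Finset.mem_univ i))
  · -- upper bound via the maximizer i0
    have hS0 : 0 ≤ ∑ j, M i0 j := hrow i0
    have h1 : ∑ j, M i0 j * Tn i0 ≤ ∑ j, M i0 j * Tn j := by
      apply Finset.sum_le_sum
      intro j _
      rcases eq_or_ne i0 j with rfl | hj
      · exact le_refl _
      · exact mul_le_mul_of_nonpos_left (hmax j (Finset.mem_univ j)) (hoff i0 j hj)
    have hsum : ∑ j, M i0 j * Tn i0 = (∑ j, M i0 j) * Tn i0 := by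
      rw [Finset.sum_mul]
    have hsch := hscheme i0
    have hrhs : Told i0 + Δt * (∑ j, M i0 j) * Tin i0 ≤ 1 + Δt * (∑ j, M i0 j) := by
      have h3 : Δt * (∑ j, M i0 j) * Tin i0 ≤ Δt * (∑ j, M i0 j) * 1 :=
        mul_le_mul_of_nonneg_left (hTin i0).2 (mul_nonneg hΔt.le hS0)
      have := (hTold i0).2
      linarith
    have hkey : (1 + Δt * (∑ j, M i0 j)) * Tn i0 ≤ 1 + Δt * (∑ j, M i0 j) := by
      have h2 : Tn i0 + Δt * ((∑ j, M i0 j) * Tn i0)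
          ≤ Told i0 + Δt * (∑ j, M i0 j) * Tin i0 := by
        rw [← hsch, ← hsum]
        nlinarith [h1]
      nlinarith [hrhs, h2]
    have hpos : 0 < 1 + Δt * (∑ j, M i0 j) := by nlinarith
    have : Tn i0 ≤ 1 := by
      have := (mul_le_mul_iff_right₀ hpos).mp (by linarith [hkey] : (1 + Δt * (∑ j, M i0 j)) * Tn i0 ≤ (1 + Δt * (∑ j, M i0 j)) * 1)
      linarith
    exact le_trans (hmax i (Finset.mem_univ i)) this
end

section
/- A matrix of the form I + ΔtM, where Δt > 0 and M has nonpositive off-diagonal entries and nonnegative row sums, is invertible with (I + ΔtM)⁻¹ entrywise nonnegative and with row sums of the inverse at most 1. -/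
open Matrix

/-- Maximum principle: if `A` has nonpositive off-diagonal entries and strictly positive
row sums, and `A.mulVec x` is entrywise nonnegative, then `x` is entrywise nonnegative. -/
lemma mulVec_nonneg_imp_nonneg {n : ℕ} (A : Matrix (Fin n) (Fin n) ℝ)
    (hoff : ∀ i j, i ≠ j → A i j ≤ 0)
    (hrow : ∀ i, 0 < ∑ j, A i j)
    (x : Fin n → ℝ) (hx : ∀ i, 0 ≤ A.mulVec x i) : ∀ i, 0 ≤ x i := by
  by_contra h
  push_neg at h
  obtain ⟨i, hi⟩ := h
  obtain ⟨i₀, -, hmin⟩ := Finset.exists_min_image Finset.univ x ⟨i, Finset.mem_univ i⟩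
  have hmin' : ∀ j, x i₀ ≤ x j := fun j => hmin j (Finset.mem_univ j)
  have hneg : x i₀ < 0 := lt_of_le_of_lt (hmin' i) hi
  have hb : A.mulVec x i₀ ≤ (∑ j, A i₀ j) * x i₀ := by
    rw [Finset.sum_mul]
    simp only [Matrix.mulVec, dotProduct]
    apply Finset.sum_le_sum
    intro j _
    rcases eq_or_ne i₀ j with rfl | hne
    · exact le_rfl
    · exact mul_le_mul_of_nonpos_left (hmin' j) (hoff i₀ j hne)
  have : A.mulVec x i₀ < 0 :=
    lt_of_le_of_lt hb (mul_neg_of_pos_of_neg (hrow i₀) hneg)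
  exact absurd (hx i₀) (not_le.mpr this)

/-- A matrix of the form `I + Δt M`, where `Δt > 0` and `M` has nonpositive off-diagonal
entries and nonnegative row sums, is invertible with entrywise nonnegative inverse whose
row sums are at most 1. -/
theorem implicit_euler_matrix_inverse_nonneg {n : ℕ} (Δt : ℝ) (hΔt : 0 < Δt)
    (M : Matrix (Fin n) (Fin n) ℝ)
    (hoff : ∀ i j, i ≠ j → M i j ≤ 0)
    (hrow : ∀ i, 0 ≤ ∑ j, M i j) :
    IsUnit (1 + Δt • M).det ∧
    (∀ i j, 0 ≤ (1 + Δt • M)⁻¹ i j) ∧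
    ∀ i, ∑ j, (1 + Δt • M)⁻¹ i j ≤ 1 := by
  set A : Matrix (Fin n) (Fin n) ℝ := 1 + Δt • M with hA
  have hAoff : ∀ i j, i ≠ j → A i j ≤ 0 := by
    intro i j hij
    have : A i j = Δt * M i j := by
      simp [hA, Matrix.add_apply, Matrix.one_apply_ne hij]
    rw [this]
    exact mul_nonpos_of_nonneg_of_nonpos hΔt.le (hoff i j hij)
  have hArow : ∀ i, 1 ≤ ∑ j, A i j := by
    intro i
    have : ∑ j, A i j = 1 + Δt * ∑ j, M i j := by
      simp [hA, Matrix.add_apply, Finset.sum_add_distrib, Matrix.one_apply,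
        Finset.mul_sum]
    rw [this]
    nlinarith [hrow i]
  have hArow' : ∀ i, 0 < ∑ j, A i j := fun i => lt_of_lt_of_le one_pos (hArow i)
  have hmono := mulVec_nonneg_imp_nonneg A hAoff hArow'
  -- invertibility
  have hdet : A.det ≠ 0 := by
    rw [Ne, Matrix.exists_mulVec_eq_zero_iff.symm]
    rintro ⟨v, hv, hAv⟩
    apply hv
    funext i
    have h1 : 0 ≤ v i := hmono v (fun j => by rw [hAv]; exact le_refl 0) i
    have h2 : 0 ≤ -v i := by
      have := hmono (-v) (fun j => by
        rw [Matrix.mulVec_neg, hAv]; simp) i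
      simpa using this
    have : v i = 0 := le_antisymm (by linarith) h1
    simpa using this
  have hdetU : IsUnit A.det := isUnit_iff_ne_zero.mpr hdet
  have hAAinv : A * A⁻¹ = 1 := Matrix.mul_nonsing_inv A hdetU
  refine ⟨hdetU, ?_, ?_⟩
  · intro i j
    have hcol : A.mulVec (fun k => A⁻¹ k j) = fun i => (1 : Matrix (Fin n) (Fin n) ℝ) i j := by
      funext i
      simp only [Matrix.mulVec, dotProduct]
      rw [← hAAinv]
      simp [Matrix.mul_apply]
    exact hmono (fun k => A⁻¹ k j) (fun i => by
      rw [hcol]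
      rcases eq_or_ne i j with rfl | hne
      · simp
      · simp [Matrix.one_apply_ne hne]) i
  · intro i
    set s : Fin n → ℝ := A⁻¹.mulVec (fun _ => 1) with hs
    have hsum : ∑ j, A⁻¹ i j = s i := by
      simp [hs, Matrix.mulVec, dotProduct]
    have hAs : A.mulVec s = fun _ => 1 := by
      rw [hs, Matrix.mulVec_mulVec, hAAinv]
      funext k
      simp [Matrix.mulVec, dotProduct, Matrix.one_apply]
    have hns : ∀ k, 0 ≤ (((fun _ => (1 : ℝ)) : Fin n → ℝ) - s) k := by
      apply hmono
      intro k
      rw [Matrix.mulVec_sub]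
      have h1 : A.mulVec (fun _ => 1) k = ∑ j, A k j := by
        simp [Matrix.mulVec, dotProduct]
      simp only [Pi.sub_apply, hAs, h1]
      linarith [hArow k]
    have := hns i
    simp only [Pi.sub_apply] at this
    rw [hsum]
    linarith
end
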